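/- For every prime p and integer g ≥ 1, every complex root of the polynomial F(t) = 1 + ∑_{j=1}^{g-1} (p^j - p^{j-1}) t^{2j} + p^g t^{2g} has absolute value p^{-1/2}. -/

import Mathlib

open Finset

/-- The polynomial `F(t) = 1 + ∑_{j=1}^{g-1} (p^j - p^{j-1}) t^{2j} + p^g t^{2g}`. -/
noncomputable def Fone (p g : ℕ) (t : ℂ) : ℂ :=
  1 + (∑ j ∈ Finset.Icc 1 (g - 1), ((p : ℂ) ^ j - (p : ℂ) ^ (j - 1)) * t ^ (2 * j))
    + (p : ℂ) ^ g * t ^ (2 * g)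

/-- "Local Riemann hypothesis": every complex root of `F` has absolute value `p^{-1/2}`. -/
theorem stmt2 (p g : ℕ) (hp : p.Prime) (hg : 1 ≤ g) (z : ℂ) (hz : Fone p g z = 0) :
    ‖z‖ = (p : ℝ) ^ (-(1 / 2 : ℝ)) := by
  have hp2 : (2:ℝ) ≤ (p:ℝ) := by exact_mod_cast hp.two_le
  set u : ℂ := (p:ℂ) * z ^ 2 with hu
  -- Step 1: rewrite the sum
  have hsum : (p:ℂ) * (∑ j ∈ Finset.Icc 1 (g-1), ((p:ℂ)^j - (p:ℂ)^(j-1)) * z^(2*j))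
      = ((p:ℂ) - 1) * ∑ j ∈ Finset.Icc 1 (g-1), u ^ j := by
    rw [Finset.mul_sum, Finset.mul_sum]
    refine Finset.sum_congr rfl fun j hj => ?_
    obtain ⟨hj1, _⟩ := Finset.mem_Icc.mp hj
    have hpj : (p:ℂ)^j = (p:ℂ) * (p:ℂ)^(j-1) := by
      conv_lhs => rw [show j = (j-1)+1 by omega]
      rw [pow_succ]; ring
    rw [hu, mul_pow, ← pow_mul]
    rw [hpj]; ring
  -- geometric sum
  have hIcc : Finset.Icc 1 (g-1) = Finset.Ico 1 g := by
    rw [← Finset.Ico_add_one_right_eq_Icc]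
    congr 1
    omega
  have hgeo : (u - 1) * ∑ j ∈ Finset.Icc 1 (g-1), u ^ j = u ^ g - u := by
    rw [hIcc, mul_comm]
    have := geom_sum_Ico_mul u hg
    simpa using this
  have hug : (p:ℂ)^g * z^(2*g) = u^g := by rw [hu, mul_pow, pow_mul]
  have h0 := hz
  unfold Fone at h0
  have hE : (p:ℂ) + ((p:ℂ)-1) * (∑ j ∈ Finset.Icc 1 (g-1), u^j) + (p:ℂ) * u^g = 0 := by
    linear_combination (p:ℂ) * h0 - hsum - (p:ℂ) * hug
  have hH : u^g * ((p:ℂ)*u - 1) = (p:ℂ) - u := by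
    linear_combination (u-1) * hE - ((p:ℂ)-1) * hgeo
  -- absolute values
  have habs : (‖u‖)^g * ‖(p:ℂ)*u - 1‖ = ‖(p:ℂ) - u‖ := by
    rw [← norm_pow, ← norm_mul, hH]
  have hid : ‖(p:ℂ)*u - 1‖^2 - ‖(p:ℂ) - u‖^2
      = ((p:ℝ)^2 - 1) * ((‖u‖)^2 - 1) := by
    rw [Complex.sq_norm, Complex.sq_norm, Complex.sq_norm]
    simp only [Complex.normSq_apply, Complex.sub_re, Complex.sub_im, Complex.mul_re,
      Complex.mul_im, Complex.natCast_re, Complex.natCast_im, Complex.one_re, Complex.one_im]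
    ring
  set a := ‖u‖ with ha
  have ha0 : 0 ≤ a := norm_nonneg _
  have hB0 : 0 ≤ ‖(p:ℂ)*u - 1‖ := norm_nonneg _
  have hC0 : 0 ≤ ‖(p:ℂ) - u‖ := norm_nonneg _
  have haeq : a = 1 := by
    rcases lt_trichotomy a 1 with h | h | h
    · exfalso
      have hlt : ((p:ℝ)^2 - 1) * (a^2 - 1) < 0 :=
        mul_neg_of_pos_of_neg (by nlinarith) (by nlinarith)
      have h1 : ‖(p:ℂ)*u - 1‖^2 < ‖(p:ℂ) - u‖^2 := by linarith
      have h2 : ‖(p:ℂ)*u - 1‖ < ‖(p:ℂ) - u‖ :=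
        lt_of_pow_lt_pow_left₀ 2 hC0 h1
      have h3 : a^g ≤ 1 := pow_le_one₀ ha0 h.le
      nlinarith [habs]
    · exact h
    · exfalso
      have hgt : 0 < ((p:ℝ)^2 - 1) * (a^2 - 1) :=
        mul_pos (by nlinarith) (by nlinarith)
      have h1 : ‖(p:ℂ) - u‖^2 < ‖(p:ℂ)*u - 1‖^2 := by linarith
      have h2 : ‖(p:ℂ) - u‖ < ‖(p:ℂ)*u - 1‖ :=
        lt_of_pow_lt_pow_left₀ 2 hB0 h1
      have hBpos : 0 < ‖(p:ℂ)*u - 1‖ := lt_of_le_of_lt hC0 h2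
      have h3 : 1 < a^g := one_lt_pow₀ h (by omega)
      nlinarith [habs]
  -- conclude
  have hz2 : (p:ℝ) * (‖z‖)^2 = 1 := by
    have h1 : ‖u‖ = 1 := haeq
    rw [hu, norm_mul, norm_pow, Complex.norm_natCast] at h1
    exact h1
  have hppos : (0:ℝ) < (p:ℝ) := by linarith
  have hzabs : (‖z‖)^2 = ((p:ℝ))⁻¹ := by
    field_simp
    linarith
  have hr : ((p:ℝ) ^ (-(1/2:ℝ)))^2 = ((p:ℝ))⁻¹ := by
    rw [← Real.rpow_natCast ((p:ℝ) ^ (-(1/2:ℝ))) 2, ← Real.rpow_mul hppos.le]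
    norm_num
    rw [Real.rpow_neg_one]
  have h2 : (‖z‖)^2 = ((p:ℝ)^(-(1/2:ℝ)))^2 := by rw [hzabs, hr]
  calc ‖z‖ = Real.sqrt ((‖z‖)^2) :=
        (Real.sqrt_sq (norm_nonneg _)).symm
    _ = Real.sqrt (((p:ℝ)^(-(1/2:ℝ)))^2) := by rw [h2]
    _ = (p:ℝ)^(-(1/2:ℝ)) := Real.sqrt_sq (Real.rpow_nonneg hppos.le _)
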